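/- Let Z₁, Z₂ be independent standard normal random variables, μ₁, μ₂ ∈ ℝ, σ₁₁, σ₂₂ > 0, ρ ∈ [−1,1], and set X₁ = μ₁ + √σ₁₁ Z₁, X₂ = μ₂ + √σ₂₂(ρZ₁ + √(1−ρ²) Z₂). For i = 1,2 let Δφᵢ = δᵢXᵢ + (1/2)γᵢXᵢ² + θᵢΔt with δᵢ, γᵢ, θᵢ ∈ ℝ, Δt > 0, and assume (γᵢ, δᵢ + γᵢμᵢ) ≠ (0,0) for i = 1,2 (so that Var(Δφᵢ) > 0). Then |Corr(Δφ₁, Δφ₂)| ≤ |ρ|, where Corr(U,V) = Cov(U,V)/√(Var(U)Var(V)). -/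

import Mathlib

open MeasureTheory ProbabilityTheory

section AuxGaussian
open Real Filter Set
open scoped ENNReal NNReal



lemma aux_integrable_pow_exp (n : ℕ) :
    Integrable (fun x : ℝ => x ^ n * rexp (-x ^ 2 / 2)) := by
  have hmeas : AEStronglyMeasurable (fun x : ℝ => x ^ n * rexp (-x ^ 2 / 2)) volume := by
    apply Measurable.aestronglyMeasurable
    exact (measurable_id.pow_const n).mul ((measurable_id.pow_const 2).neg.div_const 2).exp
  refine Integrable.mono'
    ((integrable_exp_neg_mul_sq (by norm_num : (0:ℝ) < 1/4)).const_mul (((Nat.factorial n : ℕ) : ℝ) * rexp 1))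
    hmeas (ae_of_all _ fun x => ?_)
  have h1 : |x| ^ n ≤ ((Nat.factorial n : ℕ) : ℝ) * rexp |x| := by
    have := Real.pow_div_factorial_le_exp _ (abs_nonneg x) n
    have hn : (0:ℝ) < ((Nat.factorial n : ℕ) : ℝ) := by positivity
    calc |x| ^ n = (|x| ^ n / (Nat.factorial n)) * (Nat.factorial n) := by field_simp
    _ ≤ rexp |x| * (Nat.factorial n) := by gcongr
    _ = ((Nat.factorial n : ℕ) : ℝ) * rexp |x| := by ring
  have h2 : rexp |x| * rexp (-x ^ 2 / 2) ≤ rexp 1 * rexp (-(1/4) * x ^ 2) := by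
    rw [← Real.exp_add, ← Real.exp_add]
    apply Real.exp_le_exp.2
    nlinarith [sq_nonneg (|x| - 2), sq_abs x]
  calc ‖x ^ n * rexp (-x ^ 2 / 2)‖ = |x| ^ n * rexp (-x ^ 2 / 2) := by
        rw [norm_mul, norm_pow, Real.norm_eq_abs, Real.norm_eq_abs,
          abs_of_pos (Real.exp_pos _)]
  _ ≤ (((Nat.factorial n : ℕ) : ℝ) * rexp |x|) * rexp (-x ^ 2 / 2) := by
        apply mul_le_mul_of_nonneg_right h1 (Real.exp_pos _).le
  _ = ((Nat.factorial n : ℕ) : ℝ) * (rexp |x| * rexp (-x ^ 2 / 2)) := by ring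
  _ ≤ ((Nat.factorial n : ℕ) : ℝ) * (rexp 1 * rexp (-(1/4) * x ^ 2)) := by
        apply mul_le_mul_of_nonneg_left h2 (by positivity)
  _ = ((Nat.factorial n : ℕ) : ℝ) * rexp 1 * rexp (-(1/4) * x ^ 2) := by ring

lemma aux_G0 : ∫ x : ℝ, rexp (-x ^ 2 / 2) = Real.sqrt (2 * π) := by
  have := integral_gaussian (1/2)
  simp_rw [show ∀ x : ℝ, -(1/2 : ℝ) * x ^ 2 = -x ^ 2 / 2 by intro x; ring] at this
  rw [this]
  rw [show π / (1/2 : ℝ) = 2 * π by ring]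

lemma aux_Godd (n : ℕ) (hn : Odd n) : ∫ x : ℝ, x ^ n * rexp (-x ^ 2 / 2) = 0 := by
  have h := MeasureTheory.integral_neg_eq_self (fun x : ℝ => x ^ n * rexp (-x ^ 2 / 2)) volume
  simp only [hn.neg_pow, neg_sq, neg_mul, integral_neg] at h
  linarith

lemma aux_tendsto_atTop (k : ℕ) :
    Tendsto (fun x : ℝ => x ^ k * rexp (-x ^ 2 / 2)) atTop (nhds 0) := by
  have h := rpow_mul_exp_neg_mul_sq_isLittleO_exp_neg (by norm_num : (0:ℝ) < 1/2) (k : ℝ)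
  simp_rw [Real.rpow_natCast, show ∀ x : ℝ, -(1/2 : ℝ) * x ^ 2 = -x ^ 2 / 2 by intro x; ring] at h
  refine h.isBigO.trans_tendsto ?_
  have h2 : Tendsto (fun x : ℝ => -(1/2 : ℝ) * x) atTop atBot := by
    have h3 : Tendsto (fun x : ℝ => (1/2 : ℝ) * x) atTop atTop :=
      (tendsto_const_mul_atTop_of_pos (by norm_num : (0:ℝ) < 1/2)).2 tendsto_id
    simpa [neg_mul] using tendsto_neg_atBot_iff.mpr h3
  exact Real.tendsto_exp_atBot.comp h2

lemma aux_tendsto_atBot (k : ℕ) (hk : Odd k) :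
    Tendsto (fun x : ℝ => x ^ k * rexp (-x ^ 2 / 2)) atBot (nhds 0) := by
  have h := (aux_tendsto_atTop k).comp tendsto_neg_atBot_atTop
  have heq : (fun x : ℝ => x ^ k * rexp (-x ^ 2 / 2))
      = fun x : ℝ => -(((fun y : ℝ => y ^ k * rexp (-y ^ 2 / 2)) ∘ Neg.neg) x) := by
    funext x
    simp [Function.comp, hk.neg_pow]
  rw [heq]
  simpa using h.neg



lemma aux_ftc_zero (g g' : ℝ → ℝ) (hderiv : ∀ x, HasDerivAt g (g' x) x)
    (hint : Integrable g') (htop : Tendsto g atTop (nhds 0))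
    (hbot : Tendsto g atBot (nhds 0)) : ∫ x : ℝ, g' x = 0 := by
  have h1 := integral_Ioi_of_hasDerivAt_of_tendsto' (a := 0) (f := g) (f' := g')
    (fun x _ => hderiv x) hint.integrableOn htop
  have h2 := integral_Iic_of_hasDerivAt_of_tendsto (a := 0) (f := g) (f' := g')
    (hderiv 0).continuousAt.continuousWithinAt (fun x _ => hderiv x)
    hint.integrableOn hbot
  rw [← intervalIntegral.integral_Iic_add_Ioi hint.integrableOn hint.integrableOn, h1, h2]
  ring

lemma aux_hasDerivAt_exp_neg_sq (x : ℝ) :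
    HasDerivAt (fun x : ℝ => rexp (-x ^ 2 / 2)) (-x * rexp (-x ^ 2 / 2)) x := by
  have h1 : HasDerivAt (fun x : ℝ => -x ^ 2 / 2) (-x) x := by
    have := ((hasDerivAt_pow 2 x).neg).div_const 2
    simpa using this.congr_deriv (by push_cast; ring)
  simpa [mul_comm] using h1.exp

lemma aux_G2 : ∫ x : ℝ, x ^ 2 * rexp (-x ^ 2 / 2) = Real.sqrt (2 * π) := by
  have hd : ∀ x : ℝ, HasDerivAt (fun x : ℝ => x * rexp (-x ^ 2 / 2))
      (rexp (-x ^ 2 / 2) - x ^ 2 * rexp (-x ^ 2 / 2)) x := by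
    intro x
    have := (hasDerivAt_id x).fun_mul (aux_hasDerivAt_exp_neg_sq x)
    refine this.congr_deriv ?_
    simp only [id_eq]
    ring
  have hint : Integrable (fun x : ℝ => rexp (-x ^ 2 / 2) - x ^ 2 * rexp (-x ^ 2 / 2)) := by
    simpa using ((aux_integrable_pow_exp 0).sub (aux_integrable_pow_exp 2) :
      Integrable (fun x : ℝ => x ^ 0 * rexp (-x ^ 2 / 2) - x ^ 2 * rexp (-x ^ 2 / 2)))
  have h0 := aux_ftc_zero _ _ hd hint
    (by simpa using aux_tendsto_atTop 1) (by simpa using aux_tendsto_atBot 1 ⟨0, by norm_num⟩)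
  rw [integral_sub (by simpa using aux_integrable_pow_exp 0) (aux_integrable_pow_exp 2)] at h0
  rw [← aux_G0]
  linarith

lemma aux_G4 : ∫ x : ℝ, x ^ 4 * rexp (-x ^ 2 / 2) = 3 * Real.sqrt (2 * π) := by
  have hd : ∀ x : ℝ, HasDerivAt (fun x : ℝ => x ^ 3 * rexp (-x ^ 2 / 2))
      (3 * (x ^ 2 * rexp (-x ^ 2 / 2)) - x ^ 4 * rexp (-x ^ 2 / 2)) x := by
    intro x
    have := (hasDerivAt_pow 3 x).fun_mul (aux_hasDerivAt_exp_neg_sq x)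
    refine this.congr_deriv ?_
    push_cast
    ring
  have hint : Integrable (fun x : ℝ =>
      3 * (x ^ 2 * rexp (-x ^ 2 / 2)) - x ^ 4 * rexp (-x ^ 2 / 2)) :=
    ((aux_integrable_pow_exp 2).const_mul 3).sub (aux_integrable_pow_exp 4)
  have h0 := aux_ftc_zero _ _ hd hint
    (aux_tendsto_atTop 3) (aux_tendsto_atBot 3 ⟨1, by norm_num⟩)
  rw [integral_sub ((aux_integrable_pow_exp 2).const_mul 3) (aux_integrable_pow_exp 4),
    integral_const_mul, aux_G2] at h0
  linarith



lemma aux_pdf_eq (x : ℝ) :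
    gaussianPDFReal 0 1 x = (Real.sqrt (2 * π))⁻¹ * rexp (-x ^ 2 / 2) := by
  simp [gaussianPDFReal]

lemma aux_gr : gaussianReal 0 1
    = (volume : Measure ℝ).withDensity fun x => ((gaussianPDFReal 0 1 x).toNNReal : ℝ≥0∞) := by
  rw [gaussianReal_of_var_ne_zero 0 one_ne_zero]
  rfl

lemma aux_integrable_pow_gaussian (n : ℕ) :
    Integrable (fun x : ℝ => x ^ n) (gaussianReal 0 1) := by
  rw [aux_gr, integrable_withDensity_iff_integrable_smul
    (measurable_gaussianPDFReal 0 1).real_toNNReal]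
  have : (fun x : ℝ => (gaussianPDFReal 0 1 x).toNNReal • x ^ n)
      = fun x : ℝ => (Real.sqrt (2 * π))⁻¹ * (x ^ n * rexp (-x ^ 2 / 2)) := by
    funext x
    rw [NNReal.smul_def, smul_eq_mul, Real.coe_toNNReal _ (gaussianPDFReal_nonneg 0 1 x),
      aux_pdf_eq]
    ring
  rw [this]
  exact (aux_integrable_pow_exp n).const_mul _

lemma aux_integral_pow_gaussian (n : ℕ) :
    ∫ x, x ^ n ∂(gaussianReal 0 1)
      = (Real.sqrt (2 * π))⁻¹ * ∫ x : ℝ, x ^ n * rexp (-x ^ 2 / 2) := by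
  rw [aux_gr, integral_withDensity_eq_integral_smul
    (measurable_gaussianPDFReal 0 1).real_toNNReal]
  rw [← integral_const_mul]
  congr 1
  funext x
  rw [NNReal.smul_def, smul_eq_mul, Real.coe_toNNReal _ (gaussianPDFReal_nonneg 0 1 x),
    aux_pdf_eq]
  ring

/-- moments of the standard normal -/
noncomputable def mm : ℕ → ℝ
  | 0 => 1
  | 1 => 0
  | 2 => 1
  | 3 => 0
  | 4 => 3
  | _ => 0

lemma aux_sqrt_two_pi_pos : 0 < Real.sqrt (2 * π) :=
  Real.sqrt_pos.2 (by positivity)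

lemma aux_moment (n : ℕ) (hn : n ≤ 4) : ∫ x, x ^ n ∂(gaussianReal 0 1) = mm n := by
  interval_cases n
  · rw [aux_integral_pow_gaussian]
    simp only [pow_zero, one_mul]
    rw [aux_G0, inv_mul_cancel₀ aux_sqrt_two_pi_pos.ne']
    rfl
  · rw [aux_integral_pow_gaussian, aux_Godd 1 ⟨0, by norm_num⟩, mul_zero]; rfl
  · rw [aux_integral_pow_gaussian, aux_G2, inv_mul_cancel₀ aux_sqrt_two_pi_pos.ne']; rfl
  · rw [aux_integral_pow_gaussian, aux_Godd 3 ⟨1, by norm_num⟩, mul_zero]; rfl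
  · rw [aux_integral_pow_gaussian, aux_G4]
    rw [show (Real.sqrt (2*π))⁻¹ * (3 * Real.sqrt (2*π))
      = 3 * ((Real.sqrt (2*π))⁻¹ * Real.sqrt (2*π)) by ring,
      inv_mul_cancel₀ aux_sqrt_two_pi_pos.ne']
    norm_num
    rfl




section OmegaSide

variable {Ω : Type*} [MeasureSpace Ω] [IsProbabilityMeasure (ℙ : Measure Ω)]
variable (Z1 Z2 : Ω → ℝ)

/-- formal sum of monomials `coef * Z1^p * Z2^q` -/
noncomputable def msum : List (ℝ × ℕ × ℕ) → Ω → ℝ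
  | [] => fun _ => 0
  | t :: L => fun ω => t.1 * (Z1 ω ^ t.2.1 * Z2 ω ^ t.2.2) + msum L ω

variable {Z1 Z2}
variable (h1 : Measurable Z1) (h2 : Measurable Z2) (hindep : IndepFun Z1 Z2 ℙ)
  (hl1 : Measure.map Z1 ℙ = gaussianReal 0 1) (hl2 : Measure.map Z2 ℙ = gaussianReal 0 1)

include h1 hl1 in
lemma aux_int_pow1 (n : ℕ) : Integrable (fun ω => Z1 ω ^ n) ℙ := by
  have h := aux_integrable_pow_gaussian n
  rw [← hl1] at h
  exact (integrable_map_measure (h.aestronglyMeasurable) h1.aemeasurable).mp h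

include h2 hl2 in
lemma aux_int_pow2 (n : ℕ) : Integrable (fun ω => Z2 ω ^ n) ℙ := by
  have h := aux_integrable_pow_gaussian n
  rw [← hl2] at h
  exact (integrable_map_measure (h.aestronglyMeasurable) h2.aemeasurable).mp h

include h1 h2 hindep hl1 hl2 in
lemma aux_int_mono (p q : ℕ) : Integrable (fun ω => Z1 ω ^ p * Z2 ω ^ q) ℙ := by
  have hi : IndepFun (fun ω => Z1 ω ^ p) (fun ω => Z2 ω ^ q) ℙ :=
    hindep.comp (measurable_id.pow_const p) (measurable_id.pow_const q)
  exact hi.integrable_mul (aux_int_pow1 h1 hl1 p) (aux_int_pow2 h2 hl2 q)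

include h1 hl1 in
lemma aux_val_pow1 (n : ℕ) (hn : n ≤ 4) : ∫ ω, Z1 ω ^ n ∂ℙ = mm n := by
  rw [← aux_moment n hn, ← hl1,
    integral_map h1.aemeasurable (by fun_prop)]

include h2 hl2 in
lemma aux_val_pow2 (n : ℕ) (hn : n ≤ 4) : ∫ ω, Z2 ω ^ n ∂ℙ = mm n := by
  rw [← aux_moment n hn, ← hl2,
    integral_map h2.aemeasurable (by fun_prop)]

include h1 h2 hindep hl1 hl2 in
lemma aux_val_mono (p q : ℕ) (hp : p ≤ 4) (hq : q ≤ 4) :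
    ∫ ω, Z1 ω ^ p * Z2 ω ^ q ∂ℙ = mm p * mm q := by
  have hi : IndepFun (fun ω => Z1 ω ^ p) (fun ω => Z2 ω ^ q) ℙ :=
    hindep.comp (measurable_id.pow_const p) (measurable_id.pow_const q)
  have := hi.integral_mul_eq_mul_integral (aux_int_pow1 h1 hl1 p).aestronglyMeasurable
    (aux_int_pow2 h2 hl2 q).aestronglyMeasurable
  rw [show ((fun ω => Z1 ω ^ p) * fun ω => Z2 ω ^ q) = fun ω => Z1 ω ^ p * Z2 ω ^ q from rfl]
    at this
  rw [this, aux_val_pow1 h1 hl1 p hp, aux_val_pow2 h2 hl2 q hq]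

include h1 h2 hindep hl1 hl2 in
lemma aux_msum_integrable (L : List (ℝ × ℕ × ℕ)) : Integrable (msum Z1 Z2 L) ℙ := by
  induction L with
  | nil => simpa [msum] using integrable_const (0 : ℝ)
  | cons t L ih =>
    exact ((aux_int_mono h1 h2 hindep hl1 hl2 t.2.1 t.2.2).const_mul t.1).add ih

include h1 h2 hindep hl1 hl2 in
lemma aux_msum_integral (L : List (ℝ × ℕ × ℕ)) (hL : ∀ t ∈ L, t.2.1 ≤ 4 ∧ t.2.2 ≤ 4) :
    ∫ ω, msum Z1 Z2 L ω ∂ℙ = (L.map fun t => t.1 * (mm t.2.1 * mm t.2.2)).sum := by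
  induction L with
  | nil => simp [msum]
  | cons t L ih =>
    have ht := hL t List.mem_cons_self
    rw [show (fun ω => msum Z1 Z2 (t :: L) ω)
        = fun ω => t.1 * (Z1 ω ^ t.2.1 * Z2 ω ^ t.2.2) + msum Z1 Z2 L ω from rfl]
    rw [integral_add ((aux_int_mono h1 h2 hindep hl1 hl2 t.2.1 t.2.2).const_mul t.1)
      (aux_msum_integrable h1 h2 hindep hl1 hl2 L), integral_const_mul,
      aux_val_mono h1 h2 hindep hl1 hl2 t.2.1 t.2.2 ht.1 ht.2,
      ih (fun s hs => hL s (List.mem_cons_of_mem t hs))]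
    simp

end OmegaSide

end AuxGaussian

/-- Covariance `Cov(U,V) = E[UV] - E[U]E[V]` (with respect to the ambient probability
measure `ℙ`). -/
noncomputable def cov {Ω : Type*} [MeasureSpace Ω] (U V : Ω → ℝ) : ℝ :=
  (∫ ω, U ω * V ω) - (∫ ω, U ω) * (∫ ω, V ω)

set_option maxHeartbeats 2000000 in
/-- Proposition 3: correlation hedging. For a bivariate normal pair
`(X₁, X₂)` with correlation `ρ` and optioned assets `Δφᵢ = δᵢXᵢ + (1/2)γᵢXᵢ² + θᵢΔt`
with `(γᵢ, δᵢ + γᵢμᵢ) ≠ (0,0)` (so `Var(Δφᵢ) > 0`), the absolute correlation between the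
optioned assets never exceeds `|ρ|`. -/
theorem optioned_assets_correlation_le {Ω : Type*} [MeasureSpace Ω]
    [IsProbabilityMeasure (ℙ : Measure Ω)]
    (Z1 Z2 : Ω → ℝ) (h1 : Measurable Z1) (h2 : Measurable Z2)
    (hindep : IndepFun Z1 Z2 ℙ)
    (hl1 : Measure.map Z1 ℙ = gaussianReal 0 1) (hl2 : Measure.map Z2 ℙ = gaussianReal 0 1)
    (μ1 μ2 σ11 σ22 ρ : ℝ) (h11 : 0 < σ11) (h22 : 0 < σ22) (hρ : ρ ∈ Set.Icc (-1 : ℝ) 1)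
    (X1 X2 : Ω → ℝ)
    (hX1 : ∀ ω, X1 ω = μ1 + Real.sqrt σ11 * Z1 ω)
    (hX2 : ∀ ω, X2 ω = μ2 + Real.sqrt σ22 * (ρ * Z1 ω + Real.sqrt (1 - ρ ^ 2) * Z2 ω))
    (δ1 γ1 θ1 δ2 γ2 θ2 Δt : ℝ) (hΔt : 0 < Δt)
    (hnz1 : ¬ (γ1 = 0 ∧ δ1 + γ1 * μ1 = 0)) (hnz2 : ¬ (γ2 = 0 ∧ δ2 + γ2 * μ2 = 0))
    (Δφ1 Δφ2 : Ω → ℝ)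
    (hφ1 : ∀ ω, Δφ1 ω = δ1 * X1 ω + (1/2) * γ1 * X1 ω ^ 2 + θ1 * Δt)
    (hφ2 : ∀ ω, Δφ2 ω = δ2 * X2 ω + (1/2) * γ2 * X2 ω ^ 2 + θ2 * Δt) :
    |cov Δφ1 Δφ2 / Real.sqrt (variance Δφ1 ℙ * variance Δφ2 ℙ)| ≤ |ρ| := by
  obtain ⟨hρl, hρr⟩ := hρ
  have hρ2 : ρ ^ 2 ≤ 1 := by
    have h' : |ρ| ≤ 1 := abs_le.mpr ⟨hρl, hρr⟩
    calc ρ ^ 2 = |ρ| ^ 2 := (sq_abs ρ).symm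
    _ ≤ 1 ^ 2 := by gcongr
    _ = 1 := one_pow 2
  have hs1 : Real.sqrt σ11 ^ 2 = σ11 := Real.sq_sqrt h11.le
  have hs2 : Real.sqrt σ22 ^ 2 = σ22 := Real.sq_sqrt h22.le
  have hq2 : Real.sqrt (1 - ρ ^ 2) ^ 2 = 1 - ρ ^ 2 := Real.sq_sqrt (by linarith)
  obtain ⟨s1, hs1def⟩ : ∃ x : ℝ, x = Real.sqrt σ11 := ⟨_, rfl⟩
  obtain ⟨s2, hs2def⟩ : ∃ x : ℝ, x = Real.sqrt σ22 := ⟨_, rfl⟩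
  obtain ⟨qq, hqqdef⟩ : ∃ x : ℝ, x = Real.sqrt (1 - ρ ^ 2) := ⟨_, rfl⟩
  rw [← hs1def] at hs1
  rw [← hs2def] at hs2
  rw [← hqqdef] at hq2
  obtain ⟨A1, hA1⟩ : ∃ x : ℝ, x = 1/2 * γ1 * σ11 := ⟨_, rfl⟩
  obtain ⟨B1, hB1⟩ : ∃ x : ℝ, x = (δ1 + γ1 * μ1) * s1 := ⟨_, rfl⟩
  obtain ⟨C1, hC1⟩ : ∃ x : ℝ, x = δ1 * μ1 + 1/2 * γ1 * μ1 ^ 2 + θ1 * Δt := ⟨_, rfl⟩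
  obtain ⟨A2, hA2⟩ : ∃ x : ℝ, x = 1/2 * γ2 * σ22 := ⟨_, rfl⟩
  obtain ⟨B2, hB2⟩ : ∃ x : ℝ, x = (δ2 + γ2 * μ2) * s2 := ⟨_, rfl⟩
  obtain ⟨C2, hC2⟩ : ∃ x : ℝ, x = δ2 * μ2 + 1/2 * γ2 * μ2 ^ 2 + θ2 * Δt := ⟨_, rfl⟩
  obtain ⟨a, ha⟩ : ∃ x : ℝ, x = 1/2 * γ2 * σ22 * ρ ^ 2 := ⟨_, rfl⟩
  obtain ⟨b, hb⟩ : ∃ x : ℝ, x = γ2 * σ22 * ρ * qq := ⟨_, rfl⟩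
  obtain ⟨c, hc⟩ : ∃ x : ℝ, x = 1/2 * γ2 * σ22 * (1 - ρ ^ 2) := ⟨_, rfl⟩
  obtain ⟨d, hd⟩ : ∃ x : ℝ, x = (δ2 + γ2 * μ2) * s2 * ρ := ⟨_, rfl⟩
  obtain ⟨e, he⟩ : ∃ x : ℝ, x = (δ2 + γ2 * μ2) * s2 * qq := ⟨_, rfl⟩
  -- pointwise representations
  have hΔ1 : ∀ ω, Δφ1 ω = A1 * Z1 ω ^ 2 + B1 * Z1 ω + C1 := by
    intro ω
    rw [hφ1 ω, hX1 ω, ← hs1def]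
    rw [hA1, hB1, hC1]
    linear_combination (1/2 * γ1 * Z1 ω ^ 2) * hs1
  have hΔ2 : ∀ ω, Δφ2 ω = a * Z1 ω ^ 2 + b * (Z1 ω * Z2 ω) + c * Z2 ω ^ 2
      + d * Z1 ω + e * Z2 ω + C2 := by
    intro ω
    rw [hφ2 ω, hX2 ω, ← hs2def, ← hqqdef]
    rw [ha, hb, hc, hd, he, hC2]
    linear_combination (1/2 * γ2 * ρ ^ 2 * Z1 ω ^ 2 + γ2 * ρ * qq * Z1 ω * Z2 ω
      + 1/2 * γ2 * qq ^ 2 * Z2 ω ^ 2) * hs2 + (1/2 * γ2 * σ22 * Z2 ω ^ 2) * hq2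
  -- list representations
  have hrepr1 : Δφ1 = msum Z1 Z2 ([(A1,2,0),(B1,1,0),(C1,0,0)]) := by
    funext ω
    simp only [msum]
    rw [hΔ1 ω]; ring
  have hrepr2 : Δφ2 = msum Z1 Z2 ([(a,2,0),(b,1,1),(c,0,2),(d,1,0),(e,0,1),(C2,0,0)]) := by
    funext ω
    simp only [msum]
    rw [hΔ2 ω]; ring
  have hreprsq1 : (fun ω => Δφ1 ω * Δφ1 ω)
      = msum Z1 Z2 ([(A1*A1,4,0),(2*A1*B1,3,0),(2*A1*C1,2,0),(B1*B1,2,0),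
        (2*B1*C1,1,0),(C1*C1,0,0)]) := by
    funext ω
    simp only [msum]
    rw [hΔ1 ω]; ring
  have hreprsq2 : (fun ω => Δφ2 ω * Δφ2 ω)
      = msum Z1 Z2 ([(a*a,4,0),(2*a*b,3,1),(2*a*c,2,2),(2*a*d,3,0),(2*a*e,2,1),(2*a*C2,2,0),
        (b*b,2,2),(2*b*c,1,3),(2*b*d,2,1),(2*b*e,1,2),(2*b*C2,1,1),
        (c*c,0,4),(2*c*d,1,2),(2*c*e,0,3),(2*c*C2,0,2),
        (d*d,2,0),(2*d*e,1,1),(2*d*C2,1,0),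
        (e*e,0,2),(2*e*C2,0,1),(C2*C2,0,0)]) := by
    funext ω
    simp only [msum]
    rw [hΔ2 ω]; ring
  have hreprprod : (fun ω => Δφ1 ω * Δφ2 ω)
      = msum Z1 Z2 ([(A1*a,4,0),(A1*b,3,1),(A1*c,2,2),(A1*d,3,0),(A1*e,2,1),(A1*C2,2,0),
        (B1*a,3,0),(B1*b,2,1),(B1*c,1,2),(B1*d,2,0),(B1*e,1,1),(B1*C2,1,0),
        (C1*a,2,0),(C1*b,1,1),(C1*c,0,2),(C1*d,1,0),(C1*e,0,1),(C1*C2,0,0)]) := by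
    funext ω
    simp only [msum]
    rw [hΔ1 ω, hΔ2 ω]; ring
  -- expectations
  have hmem : ∀ (L : List (ℝ × ℕ × ℕ)), (∀ t ∈ L, t.2.1 ≤ 4 ∧ t.2.2 ≤ 4) →
      ∫ ω, msum Z1 Z2 L ω = (L.map fun t => t.1 * (mm t.2.1 * mm t.2.2)).sum :=
    fun L hL => aux_msum_integral h1 h2 hindep hl1 hl2 L hL
  have hE1 : ∫ ω, Δφ1 ω = A1 + C1 := by
    rw [hrepr1, hmem _ (by intro t ht; fin_cases ht <;> exact ⟨by norm_num, by norm_num⟩)]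
    simp only [List.map_cons, List.map_nil, List.sum_cons, List.sum_nil, mm]
    ring
  have hE2 : ∫ ω, Δφ2 ω = a + c + C2 := by
    rw [hrepr2, hmem _ (by intro t ht; fin_cases ht <;> exact ⟨by norm_num, by norm_num⟩)]
    simp only [List.map_cons, List.map_nil, List.sum_cons, List.sum_nil, mm]
    ring
  have hEsq1 : ∫ ω, Δφ1 ω * Δφ1 ω = 3*A1*A1 + 2*A1*C1 + B1*B1 + C1*C1 := by
    rw [hreprsq1, hmem _ (by intro t ht; fin_cases ht <;> exact ⟨by norm_num, by norm_num⟩)]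
    simp only [List.map_cons, List.map_nil, List.sum_cons, List.sum_nil, mm]
    ring
  have hEsq2 : ∫ ω, Δφ2 ω * Δφ2 ω
      = 3*a*a + 2*a*c + 2*a*C2 + b*b + 3*c*c + 2*c*C2 + d*d + e*e + C2*C2 := by
    rw [hreprsq2, hmem _ (by intro t ht; fin_cases ht <;> exact ⟨by norm_num, by norm_num⟩)]
    simp only [List.map_cons, List.map_nil, List.sum_cons, List.sum_nil, mm]
    ring
  have hEprod : ∫ ω, Δφ1 ω * Δφ2 ω
      = 3*A1*a + A1*c + A1*C2 + B1*d + C1*a + C1*c + C1*C2 := by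
    rw [hreprprod, hmem _ (by intro t ht; fin_cases ht <;> exact ⟨by norm_num, by norm_num⟩)]
    simp only [List.map_cons, List.map_nil, List.sum_cons, List.sum_nil, mm]
    ring
  -- integrability / memℒp
  have hI1 : Integrable Δφ1 ℙ := by
    rw [hrepr1]; exact aux_msum_integrable h1 h2 hindep hl1 hl2 _
  have hI2 : Integrable Δφ2 ℙ := by
    rw [hrepr2]; exact aux_msum_integrable h1 h2 hindep hl1 hl2 _
  have hIsq1 : Integrable (fun ω => Δφ1 ω * Δφ1 ω) ℙ := by
    rw [hreprsq1]; exact aux_msum_integrable h1 h2 hindep hl1 hl2 _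
  have hIsq2 : Integrable (fun ω => Δφ2 ω * Δφ2 ω) ℙ := by
    rw [hreprsq2]; exact aux_msum_integrable h1 h2 hindep hl1 hl2 _
  have hm1 : MemLp Δφ1 2 ℙ := by
    refine (memLp_two_iff_integrable_sq hI1.aestronglyMeasurable).2 ?_
    simpa [pow_two] using hIsq1
  have hm2 : MemLp Δφ2 2 ℙ := by
    refine (memLp_two_iff_integrable_sq hI2.aestronglyMeasurable).2 ?_
    simpa [pow_two] using hIsq2
  have hvar1 : variance Δφ1 ℙ = 2*A1^2 + B1^2 := by
    rw [variance_eq_sub hm1]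
    have : ∫ ω, (Δφ1 ^ 2) ω ∂ℙ = ∫ ω, Δφ1 ω * Δφ1 ω := by
      apply integral_congr_ae; filter_upwards with ω; simp [pow_two]
    rw [this, hEsq1, hE1]; ring
  have hvar2 : variance Δφ2 ℙ = 2*A2^2 + B2^2 := by
    rw [variance_eq_sub hm2]
    have h' : ∫ ω, (Δφ2 ^ 2) ω ∂ℙ = ∫ ω, Δφ2 ω * Δφ2 ω := by
      apply integral_congr_ae; filter_upwards with ω; simp [pow_two]
    rw [h', hEsq2, hE2]
    rw [ha, hb, hc, hd, he, hA2, hB2]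
    linear_combination (γ2^2 * σ22^2 * ρ^2 + (δ2 + γ2*μ2)^2 * s2^2) * hq2
  have hcov : cov Δφ1 Δφ2 = ρ * (2*A1*A2*ρ + B1*B2) := by
    rw [cov.eq_1, hEprod, hE1, hE2]
    rw [ha, hd, hA2, hB2]
    ring
  -- positivity
  have hs1pos : 0 < s1 := hs1def ▸ Real.sqrt_pos.2 h11
  have hs2pos : 0 < s2 := hs2def ▸ Real.sqrt_pos.2 h22
  have hV1pos : 0 < 2*A1^2 + B1^2 := by
    rcases lt_or_eq_of_le (by positivity : (0:ℝ) ≤ 2*A1^2 + B1^2) with h | h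
    · exact h
    exfalso
    obtain ⟨hA10', hB10'⟩ := (add_eq_zero_iff_of_nonneg (by positivity) (sq_nonneg B1)).mp h.symm
    have hA10 : A1 = 0 := by
      have h' : A1^2 = 0 := by linarith
      exact (pow_eq_zero_iff (by norm_num : (2:ℕ) ≠ 0)).mp h'
    have hB10 : B1 = 0 := (pow_eq_zero_iff (by norm_num : (2:ℕ) ≠ 0)).mp hB10'
    apply hnz1
    constructor
    · rw [hA1] at hA10
      rcases mul_eq_zero.1 hA10 with h' | h'
      · linarith [mul_eq_zero.1 h']
        -- fallback
      · exact absurd h' h11.ne'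
    · rw [hB1] at hB10
      rcases mul_eq_zero.1 hB10 with h' | h'
      · exact h'
      · exact absurd h' hs1pos.ne'
  have hV2pos : 0 < 2*A2^2 + B2^2 := by
    rcases lt_or_eq_of_le (by positivity : (0:ℝ) ≤ 2*A2^2 + B2^2) with h | h
    · exact h
    exfalso
    obtain ⟨hA20', hB20'⟩ := (add_eq_zero_iff_of_nonneg (by positivity) (sq_nonneg B2)).mp h.symm
    have hA20 : A2 = 0 := by
      have h' : A2^2 = 0 := by linarith
      exact (pow_eq_zero_iff (by norm_num : (2:ℕ) ≠ 0)).mp h'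
    have hB20 : B2 = 0 := (pow_eq_zero_iff (by norm_num : (2:ℕ) ≠ 0)).mp hB20'
    apply hnz2
    constructor
    · rw [hA2] at hA20
      rcases mul_eq_zero.1 hA20 with h' | h'
      · linarith [mul_eq_zero.1 h']
      · exact absurd h' h22.ne'
    · rw [hB2] at hB20
      rcases mul_eq_zero.1 hB20 with h' | h'
      · exact h'
      · exact absurd h' hs2pos.ne'
  -- final inequality
  rw [hcov, hvar1, hvar2]
  have hsqrtpos : 0 < Real.sqrt ((2*A1^2 + B1^2) * (2*A2^2 + B2^2)) :=
    Real.sqrt_pos.2 (mul_pos hV1pos hV2pos)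
  rw [abs_div, abs_of_pos hsqrtpos, div_le_iff₀ hsqrtpos, abs_mul]
  refine mul_le_mul_of_nonneg_left ?_ (abs_nonneg ρ)
  apply Real.abs_le_sqrt
  have key : (2*A1*A2*ρ + B1*B2)^2
      + (2*(A1*B2 - A2*B1*ρ)^2 + 2*A2^2*(1-ρ^2)*(2*A1^2+B1^2))
      = (2*A1^2+B1^2)*(2*A2^2+B2^2) := by ring
  have t1 : 0 ≤ 2*(A1*B2 - A2*B1*ρ)^2 := by positivity
  have t2 : 0 ≤ 2*A2^2*(1-ρ^2)*(2*A1^2+B1^2) := by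
    apply mul_nonneg
    · apply mul_nonneg (by positivity)
      linarith
    · positivity
  linarith [key, t1, t2]
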